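/- Let T_𝓑 be a reduced block tree of a connected graph G. Then for every vertex v ∈ V(G), the set {B ∈ V(T_𝓑) : v ∈ B} induces a connected subtree in T_𝓑. -/

import Mathlib

/-- `B` satisfies the defining property of a block: for any two distinct vertices
`x, y ∈ B` with `xy ∉ E(G)`, one cannot separate `x` from `y` by removing fewer
than 2 vertices (i.e. after deleting any set `S` of fewer than 2 vertices avoiding
`x` and `y`, `x` and `y` are still joined by a path). -/
def BlockProp {V : Type*} (G : SimpleGraph V) (B : Set V) : Prop :=
  ∀ x ∈ B, ∀ y ∈ B, x ≠ y → ¬ G.Adj x y →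
    ∀ S : Set V, S.ncard < 2 → ∀ (hx : x ∉ S) (hy : y ∉ S),
      (G.induce Sᶜ).Reachable ⟨x, hx⟩ ⟨y, hy⟩

/-- The block decomposition `𝓑(G)`: the maximal vertex sets satisfying `BlockProp`. -/
def blocks {V : Type*} (G : SimpleGraph V) : Set (Set V) :=
  {B | Maximal (fun A => BlockProp G A) B}

/-- The block graph `G_𝓑`: vertices are the blocks of `G`, two distinct blocks
being adjacent iff they intersect. -/
def blockGraph {V : Type*} (G : SimpleGraph V) : SimpleGraph ↥(blocks G) where
  Adj A B := A ≠ B ∧ ((A : Set V) ∩ (B : Set V)).Nonempty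
  symm := ⟨by
    rintro A B ⟨h1, h2⟩
    exact ⟨h1.symm, by rwa [Set.inter_comm]⟩⟩
  loopless := ⟨fun A h => h.1 rfl⟩

open SimpleGraph

section Aux
variable {V : Type*} [Fintype V] {G : SimpleGraph V}

lemma reach_of_mem_block {B : Set V} (hB : BlockProp G B) {x y : V} (hx : x ∈ B) (hy : y ∈ B)
    (S : Set V) (hS : S.ncard < 2) (hxS : x ∉ S) (hyS : y ∉ S) :
    (G.induce Sᶜ).Reachable ⟨x, hxS⟩ ⟨y, hyS⟩ := by
  rcases eq_or_ne x y with rfl | hne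
  · exact Reachable.refl _
  by_cases hadj : G.Adj x y
  · exact SimpleGraph.Adj.reachable (by exact hadj)
  · exact hB x hx y hy hne hadj S hS hxS hyS

lemma not_both_mem {S : Set V} (hS : S.ncard < 2) {x y : V} (hxy : x ≠ y)
    (hx : x ∈ S) (hy : y ∈ S) : False := by
  have := (Set.one_lt_ncard (Set.toFinite S)).2 ⟨x, hx, y, hy, hxy⟩
  omega

lemma blocks_inter_subsingleton {A B : Set V} (hA : A ∈ blocks G) (hB : B ∈ blocks G)
    {x y : V} (hxy : x ≠ y) (hxA : x ∈ A) (hxB : x ∈ B) (hyA : y ∈ A) (hyB : y ∈ B) :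
    A = B := by
  have key : ∀ p ∈ A, ∀ q ∈ B, ∀ S : Set V, S.ncard < 2 → ∀ (hp : p ∉ S) (hq : q ∉ S),
      (G.induce Sᶜ).Reachable ⟨p, hp⟩ ⟨q, hq⟩ := by
    intro p hp q hq S hS hpS hqS
    by_cases hxS : x ∈ S
    · have hyS : y ∉ S := fun h => not_both_mem hS hxy hxS h
      exact (reach_of_mem_block hA.1 hp hyA S hS hpS hyS).trans
        (reach_of_mem_block hB.1 hyB hq S hS hyS hqS)
    · exact (reach_of_mem_block hA.1 hp hxA S hS hpS hxS).trans
        (reach_of_mem_block hB.1 hxB hq S hS hxS hqS)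
  have hU : BlockProp G (A ∪ B) := by
    intro p hp q hq hne hadj S hS hpS hqS
    rw [Set.mem_union] at hp hq
    rcases hp with hp | hp <;> rcases hq with hq | hq
    · exact hA.1 p hp q hq hne hadj S hS hpS hqS
    · exact key p hp q hq S hS hpS hqS
    · exact (key q hq p hp S hS hqS hpS).symm
    · exact hB.1 p hp q hq hne hadj S hS hpS hqS
  have h1 := hA.2 hU Set.subset_union_left
  have h2 := hB.2 hU Set.subset_union_right
  exact subset_antisymm (fun a ha => h2 (Or.inl ha)) (fun a ha => h1 (Or.inr ha))

lemma exists_sep_singleton (hG : G.Connected) {C : Set V} (hC : C ∈ blocks G) {v : V}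
    (hv : v ∉ C) :
    ∃ x ∈ C, ∃ s : V, ∃ (hvs : v ∉ ({s} : Set V)) (hxs : x ∉ ({s} : Set V)),
      ¬ (G.induce ({s} : Set V)ᶜ).Reachable ⟨v, hvs⟩ ⟨x, hxs⟩ := by
  have hni : ¬ BlockProp G (insert v C) :=
    fun h => hv (hC.2 h (Set.subset_insert _ _) (Set.mem_insert _ _))
  by_contra hcon
  push_neg at hcon
  apply hni
  have base : ∀ q ∈ C, v ≠ q → ∀ S : Set V, S.ncard < 2 → ∀ (hvS : v ∉ S) (hqS : q ∉ S),
      (G.induce Sᶜ).Reachable ⟨v, hvS⟩ ⟨q, hqS⟩ := by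
    intro q hq hne S hS hvS hqS
    rcases S.eq_empty_or_nonempty with rfl | hSne
    · exact Reachable.map
        (⟨fun w => ⟨w, by simp⟩, fun h => h⟩ : G →g G.induce (∅ : Set V)ᶜ)
        (hG.preconnected v q)
    · have h1 : S.ncard = 1 := by
        have := (Set.ncard_pos (Set.toFinite S)).2 hSne
        omega
      obtain ⟨s, rfl⟩ := Set.ncard_eq_one.1 h1
      exact hcon q hq s hvS hqS
  intro p hp q hq hne hadj S hS hpS hqS
  rw [Set.mem_insert_iff] at hp hq
  rcases hp with rfl | hp <;> rcases hq with rfl | hq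
  · exact absurd rfl hne
  · exact base q hq hne S hS hpS hqS
  · exact (base p hp (Ne.symm hne) S hS hqS hpS).symm
  · exact hC.1 p hp q hq hne hadj S hS hpS hqS

lemma exists_first_split {α : Type*} (P : α → Prop) :
    ∀ (L : List α) (hne : L ≠ []), P (L.getLast hne) →
      ∃ M1 c M2, L = M1 ++ c :: M2 ∧ P c ∧ ∀ y ∈ M1, ¬ P y := by
  intro L
  induction L with
  | nil => intro h; exact absurd rfl h
  | cons a l ih =>
    intro hne hP
    by_cases ha : P a
    · exact ⟨[], a, l, rfl, ha, by simp⟩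
    · cases l with
      | nil => simp only [List.getLast_singleton] at hP; exact absurd hP ha
      | cons b m =>
        have hl : (b :: m : List α) ≠ [] := by simp
        have hP' : P ((b :: m).getLast hl) := by
          rwa [List.getLast_cons hl] at hP
        obtain ⟨M1, c, M2, heq, hc, hbad⟩ := ih hl hP'
        refine ⟨a :: M1, c, M2, by rw [List.cons_append, heq], hc, ?_⟩
        intro y hy
        rcases List.mem_cons.1 hy with rfl | hy
        · exact ha
        · exact hbad y hy

end Aux

section Main
variable {V : Type*} [Fintype V] {G : SimpleGraph V}

private lemma getLast_congr {α : Type*} {l1 l2 : List α} (h : l1 = l2) (h1 : l1 ≠ [])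
    (h2 : l2 ≠ []) : l1.getLast h1 = l2.getLast h2 := by subst h; rfl

def Good (G : SimpleGraph V) (s v : V) (hvs : v ∉ ({s} : Set V)) (D : ↥(blocks G)) : Prop :=
  ∃ p, ∃ (hp : p ∈ (D : Set V)) (hps : p ∉ ({s} : Set V)),
    (G.induce ({s} : Set V)ᶜ).Reachable ⟨p, hps⟩ ⟨v, hvs⟩

lemma chain_blocks_mem (hG : G.Connected) (v : V) :
    ∀ (n : ℕ) (L : List ↥(blocks G)), L.length ≤ n →
      List.Chain' (fun X Y : ↥(blocks G) => X ≠ Y ∧ ((X : Set V) ∩ (Y : Set V)).Nonempty) L →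
      L.Nodup →
      ∀ (hne : L ≠ []), v ∈ (L.head hne : Set V) → v ∈ (L.getLast hne : Set V) →
      ∀ C ∈ L, v ∈ (C : Set V) := by
  intro n
  induction n with
  | zero =>
    intro L hlen _ _ hne _ _
    exact absurd (List.length_eq_zero_iff.1 (Nat.le_zero.1 hlen)) hne
  | succ n ih =>
    intro L hlen hchain hnodup hne hhead hlast C hC
    cases L with
    | nil => exact absurd rfl hne
    | cons A M =>
      cases M with
      | nil =>
        obtain rfl := List.mem_singleton.1 hC
        exact hhead
      | cons A1 M' =>
        have hvA : v ∈ (A : Set V) := hhead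
        have hlast' : v ∈ (((A1 :: M').getLast (by simp) : ↥(blocks G)) : Set V) := by
          rwa [List.getLast_cons (by simp : (A1 :: M' : List _) ≠ [])] at hlast
        have hR01 : A ≠ A1 ∧ ((A : Set V) ∩ (A1 : Set V)).Nonempty := (List.isChain_cons_cons.1 hchain).1
        have hchainT := (List.isChain_cons_cons.1 hchain).2
        have hnodupT : (A1 :: M').Nodup := (List.nodup_cons.1 hnodup).2
        have hAnot : A ∉ A1 :: M' := (List.nodup_cons.1 hnodup).1
        have hvA1 : v ∈ (A1 : Set V) := by
          by_contra hv1
          obtain ⟨x, hxA1, s, hvs, hxs, hsep⟩ := exists_sep_singleton hG A1.2 hv1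
          have hsingle : ({s} : Set V).ncard < 2 := by
            rw [Set.ncard_singleton]; omega
          have hgoodA : Good G s v hvs A := ⟨v, hvA, hvs, Reachable.refl _⟩
          have hbadA1 : ¬ Good G s v hvs A1 := by
            rintro ⟨p, hp, hps, hr⟩
            exact hsep ((reach_of_mem_block A1.2.1 hxA1 hp {s} hsingle hxs hps).trans hr).symm
          have hstep : ∀ X Y : ↥(blocks G), ((X : Set V) ∩ (Y : Set V)).Nonempty →
              ¬ Good G s v hvs X → Good G s v hvs Y →
              s ∈ (X : Set V) ∧ s ∈ (Y : Set V) := by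
            rintro X Y ⟨t, htX, htY⟩ hX ⟨p, hp, hps, hr⟩
            rcases eq_or_ne t s with rfl | hts
            · exact ⟨htX, htY⟩
            · have hts' : t ∉ ({s} : Set V) := hts
              exact absurd ⟨t, htX, hts',
                (reach_of_mem_block Y.2.1 htY hp {s} hsingle hts' hps).trans hr⟩ hX
          have hsA : s ∈ (A : Set V) :=
            (hstep A1 A (by rw [Set.inter_comm]; exact hR01.2) hbadA1 hgoodA).2
          obtain ⟨M1, Cm, M2, heq, hgoodCm, hbadM1⟩ :=
            exists_first_split (Good G s v hvs) (A1 :: M') (by simp)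
              ⟨v, hlast', hvs, Reachable.refl _⟩
          have hM1ne : M1 ≠ [] := by
            rintro rfl
            rw [List.nil_append] at heq
            injection heq with h1 h2
            exact hbadA1 (h1 ▸ hgoodCm)
          have hsplit : A :: A1 :: M' = (A :: M1) ++ (Cm :: M2) := by
            rw [List.cons_append, heq]
          have hchain2 := hchain
          rw [hsplit, List.Chain', List.isChain_append] at hchain2
          obtain ⟨hc1, hc2, hc3⟩ := hchain2
          have hmem1 : (A :: M1).getLast (by simp) ∈ (A :: M1).getLast? := by
            rw [List.getLast?_eq_getLast (by simp)]; rfl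
          have hpredR := hc3 ((A :: M1).getLast (by simp)) hmem1 Cm rfl
          have hpredBad : ¬ Good G s v hvs ((A :: M1).getLast (by simp)) := by
            have hmem : (A :: M1).getLast (by simp) ∈ M1 := by
              rw [List.getLast_cons hM1ne]
              exact List.getLast_mem hM1ne
            exact hbadM1 _ hmem
          have hsCm : s ∈ (Cm : Set V) := (hstep _ Cm hpredR.2 hpredBad hgoodCm).2
          have hCmTail : Cm ∈ A1 :: M' := by
            rw [heq]; exact List.mem_append_right _ List.mem_cons_self
          have hACm : A ≠ Cm := fun h => hAnot (h ▸ hCmTail)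
          have hvCm : v ∈ (Cm : Set V) := by
            have e1 : (A :: A1 :: M').length = ((A :: M1) ++ (Cm :: M2)).length := by
              rw [hsplit]
            have hM1pos : 0 < M1.length := List.length_pos_iff.2 hM1ne
            have hlen2 : (A :: Cm :: M2).length ≤ n := by
              simp only [List.length_cons, List.length_append] at e1 hlen ⊢
              omega
            have hch2 : List.Chain' (fun X Y : ↥(blocks G) =>
                X ≠ Y ∧ ((X : Set V) ∩ (Y : Set V)).Nonempty) (A :: Cm :: M2) :=
              List.isChain_cons_cons.2 ⟨⟨hACm, s, hsA, hsCm⟩, hc2⟩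
            have hsub : List.Sublist (Cm :: M2) (A1 :: M') :=
              heq.symm ▸ (List.sublist_append_right M1 (Cm :: M2))
            have hnd2 : (A :: Cm :: M2).Nodup :=
              List.nodup_cons.2 ⟨fun h => hAnot (hsub.subset h), hsub.nodup hnodupT⟩
            have elast : (A :: Cm :: M2).getLast (by simp) = (A1 :: M').getLast (by simp) := by
              rw [List.getLast_cons (by simp : (Cm :: M2 : List _) ≠ [])]
              calc (Cm :: M2).getLast (by simp)
                  = (M1 ++ Cm :: M2).getLast (by simp) := (List.getLast_append_of_ne_nil _ (by simp)).symm
                _ = (A1 :: M').getLast (by simp) := getLast_congr heq.symm _ _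
            exact ih (A :: Cm :: M2) hlen2 hch2 hnd2 (by simp) hvA
              (by rw [elast]; exact hlast') Cm (by simp)
          have hvns : v ≠ s := fun h => hvs (by rw [h]; rfl)
          exact hACm (Subtype.ext
            (blocks_inter_subsingleton A.2 Cm.2 hvns hvA hvCm hsA hsCm))
        have htail := ih (A1 :: M') (by simp only [List.length_cons] at hlen ⊢; omega)
          hchainT hnodupT (by simp) hvA1 hlast'
        rcases List.mem_cons.1 hC with rfl | hC'
        · exact hvA
        · exact htail C hC'

end Main

section Final
variable {V : Type*} [Fintype V] {G : SimpleGraph V}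

lemma exists_block_mem (G : SimpleGraph V) (v : V) : ∃ B ∈ blocks G, v ∈ B := by
  have h1 : BlockProp G {v} := by
    intro x hx y hy hne _ _ _ _ _
    rw [Set.mem_singleton_iff] at hx hy
    subst hx; subst hy
    exact absurd rfl hne
  obtain ⟨B, hBs, hmax⟩ := Set.Finite.exists_maximalFor id
    {A : Set V | BlockProp G A ∧ v ∈ A} (Set.toFinite _) ⟨{v}, h1, rfl⟩
  refine ⟨B, ⟨hBs.1, fun A hA hBA => ?_⟩, hBs.2⟩
  have : B = A := le_antisymm hBA (hmax (j := A) ⟨hA, hBA hBs.2⟩ hBA)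
  exact this ▸ le_refl _

lemma reach_induce {α : Type*} {H : SimpleGraph α} {S : Set α} :
    ∀ {x y : α} (p : H.Walk x y), (∀ c ∈ p.support, c ∈ S) →
      ∀ (hx : x ∈ S) (hy : y ∈ S), (H.induce S).Reachable ⟨x, hx⟩ ⟨y, hy⟩ := by
  intro x y p
  induction p with
  | nil => intro _ hx hy; exact Reachable.refl _
  | @cons a b c h q ihq =>
    intro hsup hx hy
    have hb : b ∈ S := hsup b (by simp)
    exact (SimpleGraph.Adj.reachable (by exact h : (H.induce S).Adj ⟨a, hx⟩ ⟨b, hb⟩)).trans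
      (ihq (fun c hc => hsup c (by simp [hc])) hb hy)

end Final

/-- In a reduced block tree `T` of a connected graph `G`, for every vertex `v` the
set of blocks containing `v` induces a connected subtree of `T`. -/
theorem reduced_block_tree_subtree {V : Type*} [Fintype V] (G : SimpleGraph V)
    (hG : G.Connected) (T : SimpleGraph ↥(blocks G)) (hT : T ≤ blockGraph G)
    (hTree : T.IsTree) (v : V) :
    (T.induce {B : ↥(blocks G) | v ∈ (B : Set V)}).Connected := by
  classical
  obtain ⟨B0, hB0, hvB0⟩ := exists_block_mem G v
  rw [SimpleGraph.connected_iff]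
  refine ⟨?_, ⟨⟨⟨B0, hB0⟩, hvB0⟩⟩⟩
  rintro ⟨B1, h1⟩ ⟨B2, h2⟩
  obtain ⟨w⟩ := hTree.isConnected.preconnected B1 B2
  set q : T.Walk B1 B2 := (w.toPath : T.Path B1 B2).1 with hq_def
  have hqpath : q.IsPath := (w.toPath : T.Path B1 B2).2
  have hchain : List.Chain' (fun X Y : ↥(blocks G) =>
      X ≠ Y ∧ ((X : Set V) ∩ (Y : Set V)).Nonempty) q.support :=
    List.IsChain.imp (fun a b h => hT h) q.isChain_adj_support
  have hall : ∀ C ∈ q.support, v ∈ (C : Set V) := by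
    refine chain_blocks_mem hG v q.support.length q.support le_rfl hchain
      ((SimpleGraph.Walk.isPath_def q).1 hqpath) q.support_ne_nil ?_ ?_
    · rw [SimpleGraph.Walk.head_support]; exact h1
    · rw [SimpleGraph.Walk.getLast_support]; exact h2
  exact reach_induce q hall h1 h2
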